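/- (Case 1 descent) Let $p \ge 5$ be a prime and let $x, r, y$ be integers with $\gcd(x,r) = 1$, $r \ge 1$, satisfying $(x-3r)^3+(x-2r)^3+(x-r)^3+x^3+(x+r)^3+(x+2r)^3+(x+3r)^3 = y^p$. Suppose $7 \nmid x$, $2 \nmid x$ and $3 \nmid x$. Then there exist integers $w_1, w_2$ with $x = w_1^p$, $x^2 + 12r^2 = 7^{p-1} w_2^p$, and consequently $7^{p-1} w_2^p - w_1^{2p} = 12 r^2$. -/

import Mathlib

theorem case1_descent
    (p : ℕ) (hp : p.Prime) (hp5 : 5 ≤ p)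
    (x r y : ℤ) (hgcd : Int.gcd x r = 1) (hr : 1 ≤ r)
    (heq : (x - 3 * r) ^ 3 + (x - 2 * r) ^ 3 + (x - r) ^ 3 + x ^ 3 +
      (x + r) ^ 3 + (x + 2 * r) ^ 3 + (x + 3 * r) ^ 3 = y ^ p)
    (h7 : ¬ (7 : ℤ) ∣ x) (h2 : ¬ (2 : ℤ) ∣ x) (h3 : ¬ (3 : ℤ) ∣ x) :
    ∃ w₁ w₂ : ℤ, x = w₁ ^ p ∧ x ^ 2 + 12 * r ^ 2 = 7 ^ (p - 1) * w₂ ^ p ∧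
      7 ^ (p - 1) * w₂ ^ p - w₁ ^ (2 * p) = 12 * r ^ 2 := by
  have hpodd : Odd p := hp.odd_of_ne_two (by omega)
  have h7p : Prime (7 : ℤ) := by norm_num
  have heq' : 7 * (x * (x ^ 2 + 12 * r ^ 2)) = y ^ p := by linear_combination heq
  -- 7 ∣ y
  have h7y : (7 : ℤ) ∣ y := by
    have : (7 : ℤ) ∣ y ^ p := ⟨_, heq'.symm⟩
    exact h7p.dvd_of_dvd_pow this
  obtain ⟨w, rfl⟩ := h7y
  have hp1 : 1 ≤ p := by omega
  have hkey : x * (x ^ 2 + 12 * r ^ 2) = 7 ^ (p - 1) * w ^ p := by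
    have h7ne : (7 : ℤ) ≠ 0 := by norm_num
    have : 7 * (x * (x ^ 2 + 12 * r ^ 2)) = 7 * (7 ^ (p - 1) * w ^ p) := by
      rw [heq', mul_pow, ← mul_assoc, ← pow_succ']
      congr 2
      omega
    exact mul_left_cancel₀ h7ne this
  -- coprimality of x and x^2 + 12 r^2
  have hxr : IsCoprime x r := Int.isCoprime_iff_gcd_eq_one.mpr hgcd
  have hx2 : IsCoprime x 2 := (Int.prime_two.coprime_iff_not_dvd.mpr h2).symm
  have hx3 : IsCoprime x 3 := (Int.prime_three.coprime_iff_not_dvd.mpr h3).symm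
  have hx7 : IsCoprime x 7 := (h7p.coprime_iff_not_dvd.mpr h7).symm
  have hx12 : IsCoprime x (12 * r ^ 2) := by
    have : IsCoprime x (12 : ℤ) := by
      have h4 : IsCoprime x (4:ℤ) := by
        have := hx2.mul_right hx2
        norm_num at this ⊢; exact this
      have := h4.mul_right hx3
      norm_num at this ⊢; exact this
    exact this.mul_right (hxr.pow_right)
  have hcop : IsCoprime x (x ^ 2 + 12 * r ^ 2) := by
    have := hx12.add_mul_left_right x
    have e : x ^ 2 + 12 * r ^ 2 = 12 * r ^ 2 + x * x := by ring
    rw [e]; exact this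
  -- 7^(p-1) divides x^2 + 12 r^2
  have hx7p : IsCoprime (7 ^ (p - 1)) x := (hx7.symm.pow_left)
  have hdvd : (7 : ℤ) ^ (p - 1) ∣ x ^ 2 + 12 * r ^ 2 := by
    have h1 : (7 : ℤ) ^ (p - 1) ∣ x * (x ^ 2 + 12 * r ^ 2) := ⟨w ^ p, hkey⟩
    exact hx7p.dvd_of_dvd_mul_left h1
  obtain ⟨C, hC⟩ := hdvd
  have h7pne : (7 : ℤ) ^ (p - 1) ≠ 0 := pow_ne_zero _ (by norm_num)
  have hAC : x * C = w ^ p := by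
    have : 7 ^ (p - 1) * (x * C) = 7 ^ (p - 1) * w ^ p := by
      rw [← hkey, hC]; ring
    exact mul_left_cancel₀ h7pne this
  have hcopC : IsCoprime x C := by
    apply hcop.of_isCoprime_of_dvd_right
    exact ⟨7 ^ (p - 1), by rw [hC]; ring⟩
  -- x is a p-th power
  obtain ⟨a, ha⟩ := exists_associated_pow_of_mul_eq_pow' hcopC hAC
  obtain ⟨b, hb⟩ := exists_associated_pow_of_mul_eq_pow' hcopC.symm
    (by rw [mul_comm] at hAC; exact hAC)
  have hax : x = a ^ p ∨ x = (-a) ^ p := by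
    rcases Int.associated_iff.mp ha with h | h
    · left; exact h.symm
    · right; rw [hpodd.neg_pow]; omega
  have hbx : C = b ^ p ∨ C = (-b) ^ p := by
    rcases Int.associated_iff.mp hb with h | h
    · left; exact h.symm
    · right; rw [hpodd.neg_pow]; omega
  obtain ⟨w₁, hw₁⟩ : ∃ w₁ : ℤ, x = w₁ ^ p := by
    rcases hax with h | h
    · exact ⟨a, h⟩
    · exact ⟨-a, h⟩
  obtain ⟨w₂, hw₂⟩ : ∃ w₂ : ℤ, C = w₂ ^ p := by
    rcases hbx with h | h
    · exact ⟨b, h⟩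
    · exact ⟨-b, h⟩
  refine ⟨w₁, w₂, hw₁, ?_, ?_⟩
  · rw [hC, hw₂]
  · have : x ^ 2 = w₁ ^ (2 * p) := by
      rw [hw₁, ← pow_mul, mul_comm]
    have hB : x ^ 2 + 12 * r ^ 2 = 7 ^ (p - 1) * w₂ ^ p := by rw [hC, hw₂]
    linear_combination this - hB
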